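/- Assume Δₖ ≠ 0 for k = 1,2,3,4. Then S has at most two negative eigenvalues: the number of roots of the characteristic polynomial of S, counted with multiplicity, that lie in (−∞, 0) is at most 2. -/

import Mathlib

open Polynomial Matrix


open Polynomial Matrix

lemma charpoly_unitary_conj {n : Type*} [Fintype n] [DecidableEq n]
    (U D : Matrix n n ℝ) (h1 : U * star U = 1) (h2 : star U * U = 1) :
    (U * D * star U).charpoly = D.charpoly := by
  set f : Matrix n n ℝ →+* Matrix n n ℝ[X] := (Polynomial.C : ℝ →+* ℝ[X]).mapMatrix with hf
  have hs : Matrix.scalar n (X : ℝ[X]) = (X : ℝ[X]) • (1 : Matrix n n ℝ[X]) := by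
    rw [Matrix.smul_one_eq_diagonal]; rfl
  have key : charmatrix (U * D * star U) = f U * charmatrix D * f (star U) := by
    unfold charmatrix
    rw [mul_sub, sub_mul, hs]
    congr 1
    · rw [mul_smul_comm, smul_mul_assoc, mul_one, ← _root_.map_mul, h1, _root_.map_one]
    · rw [← _root_.map_mul, ← _root_.map_mul]
  have h3 : (f U).det * (f (star U)).det = 1 := by
    rw [← det_mul, ← _root_.map_mul, h1, _root_.map_one, det_one]
  rw [Matrix.charpoly, Matrix.charpoly, key, det_mul, det_mul, mul_right_comm, h3, one_mul]

lemma charpoly_diagonal' {n : Type*} [Fintype n] [DecidableEq n] (d : n → ℝ) :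
    (Matrix.diagonal d).charpoly = ∏ i, (X - C (d i)) := by
  have : charmatrix (Matrix.diagonal d) = Matrix.diagonal (fun i => X - C (d i)) := by
    ext i j
    by_cases h : i = j
    · subst h; simp
    · simp [h, Matrix.diagonal_apply_ne _ h]
  rw [Matrix.charpoly, this, det_diagonal]

lemma charpoly_eq_prod {n : Type*} [Fintype n] [DecidableEq n]
    (A : Matrix n n ℝ) (hA : A.IsHermitian) :
    A.charpoly = ∏ i, (X - C (hA.eigenvalues i)) := by
  conv_lhs => rw [hA.spectral_theorem, Unitary.conjStarAlgAut_apply]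
  rw [charpoly_unitary_conj _ _ (Matrix.mem_unitaryGroup_iff.mp (hA.eigenvectorUnitary).2) (Matrix.mem_unitaryGroup_iff'.mp (hA.eigenvectorUnitary).2)]
  have : (RCLike.ofReal ∘ hA.eigenvalues : n → ℝ) = hA.eigenvalues := by
    funext i; simp
  rw [this, charpoly_diagonal']



lemma neg_eig_card {A : Matrix (Fin 4) (Fin 4) ℝ} (hA : A.IsHermitian)
    (h14 : A 0 3 = 0) (h41 : A 3 0 = 0) (h11 : 0 ≤ A 0 0) (h44 : 0 ≤ A 3 3) :
    (Finset.univ.filter (fun i => hA.eigenvalues i < 0)).card ≤ 2 := by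
  by_contra hcon
  push_neg at hcon
  obtain ⟨t, hts, ht3⟩ := Finset.exists_subset_card_eq (show 3 ≤ _ from hcon)
  set ev : Fin 4 → ℝ := hA.eigenvalues with hev
  set V : Fin 4 → (Fin 4 → ℝ) := fun i => ⇑(hA.eigenvectorBasis i) with hV
  have hVV : ∀ i j, ∑ q, V i q * V j q = if i = j then 1 else 0 := by
    intro i j
    have h := orthonormal_iff_ite.mp hA.eigenvectorBasis.orthonormal i j
    simp [PiLp.inner_apply, RCLike.inner_apply, starRingEnd_apply] at h
    rw [← h]; exact Finset.sum_congr rfl fun q _ => mul_comm _ _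
  have hSV : ∀ i q, ∑ p, A q p * V i p = ev i * V i q := by
    intro i q
    have h := congrFun (hA.mulVec_eigenvectorBasis i) q
    simpa [Matrix.mulVec, dotProduct] using h
  -- the 2×3 coefficient matrix
  set W : Matrix (Fin 2) {i // i ∈ t} ℝ :=
    fun p i => V i.1 ⟨(p : ℕ) + 1, by omega⟩ with hW
  have hker : LinearMap.ker W.mulVecLin ≠ ⊥ := by
    intro h
    have hinj := LinearMap.ker_eq_bot.mp h
    have hle := LinearMap.finrank_le_finrank_of_injective hinj
    simp [Module.finrank_fintype_fun_eq_card, Fintype.card_coe, ht3] at hle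
  obtain ⟨c, hcker, hc0⟩ := Submodule.exists_mem_ne_zero_of_ne_bot hker
  have hTc : W.mulVec c = 0 := LinearMap.mem_ker.mp hcker
  set c' : Fin 4 → ℝ := fun q => if h : q ∈ t then c ⟨q, h⟩ else 0 with hc'
  have hsum : ∀ (g : Fin 4 → ℝ), ∑ q : Fin 4, c' q * g q = ∑ i : {i // i ∈ t}, c i * g i.1 := by
    intro g
    rw [← Finset.sum_subset (Finset.subset_univ t)
      (by intro q _ hq; simp [hc', hq])]
    rw [← Finset.sum_coe_sort t (fun q => c' q * g q)]
    refine Finset.sum_congr rfl fun i _ => ?_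
    simp [hc', i.2]
  set x : Fin 4 → ℝ := fun q => ∑ i, c' i * V i q with hx
  have hx1 : x 1 = 0 := by
    have h := congrFun hTc 0
    simp only [Matrix.mulVec, dotProduct, Pi.zero_apply] at h
    rw [hx]; show (∑ i, c' i * V i 1) = 0
    rw [hsum (fun q => V q 1), ← h]
    exact Finset.sum_congr rfl fun i _ => by rw [mul_comm]; rfl
  have hx2 : x 2 = 0 := by
    have h := congrFun hTc 1
    simp only [Matrix.mulVec, dotProduct, Pi.zero_apply] at h
    rw [hx]; show (∑ i, c' i * V i 2) = 0
    rw [hsum (fun q => V q 2), ← h]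
    exact Finset.sum_congr rfl fun i _ => by rw [mul_comm]; rfl
  set Q : ℝ := ∑ q, x q * ∑ p, A q p * x p with hQ
  -- spectral computation of Q
  have hAx : ∀ q, ∑ p, A q p * x p = ∑ i, c' i * (ev i * V i q) := by
    intro q
    calc ∑ p, A q p * x p = ∑ p, ∑ i, c' i * (A q p * V i p) := by
          refine Finset.sum_congr rfl fun p _ => ?_
          rw [hx]
          show A q p * (∑ i, c' i * V i p) = _
          rw [Finset.mul_sum]
          exact Finset.sum_congr rfl fun i _ => by ring
      _ = ∑ i, ∑ p, c' i * (A q p * V i p) := Finset.sum_comm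
      _ = ∑ i, c' i * (ev i * V i q) := by
          refine Finset.sum_congr rfl fun i _ => ?_
          rw [← Finset.mul_sum, hSV i q]
  have hxV : ∀ i, ∑ q, x q * V i q = c' i := by
    intro i
    calc ∑ q, x q * V i q = ∑ q, ∑ j, c' j * (V j q * V i q) := by
          refine Finset.sum_congr rfl fun q _ => ?_
          rw [hx]
          show (∑ j, c' j * V j q) * V i q = _
          rw [Finset.sum_mul]
          exact Finset.sum_congr rfl fun j _ => by ring
      _ = ∑ j, ∑ q, c' j * (V j q * V i q) := Finset.sum_comm
      _ = ∑ j, c' j * (if j = i then 1 else 0) := by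
          refine Finset.sum_congr rfl fun j _ => ?_
          rw [← Finset.mul_sum, hVV j i]
      _ = c' i := by simp
  have hQspec : Q = ∑ i, ev i * c' i ^ 2 := by
    calc Q = ∑ q, ∑ i, (c' i * ev i) * (x q * V i q) := by
          refine Finset.sum_congr rfl fun q _ => ?_
          rw [hAx q, Finset.mul_sum]
          exact Finset.sum_congr rfl fun i _ => by ring
      _ = ∑ i, ∑ q, (c' i * ev i) * (x q * V i q) := Finset.sum_comm
      _ = ∑ i, ev i * c' i ^ 2 := by
          refine Finset.sum_congr rfl fun i _ => ?_
          rw [← Finset.mul_sum, hxV i]; ring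
  -- Q < 0
  have hQneg : Q < 0 := by
    rw [hQspec]
    have : ∑ i : Fin 4, (0:ℝ) = 0 := by simp
    rw [← this]
    apply Finset.sum_lt_sum
    · intro i _
      by_cases hi : i ∈ t
      · have hneg : ev i < 0 := by
          have := hts hi
          simpa using (Finset.mem_filter.mp this).2
        nlinarith [sq_nonneg (c' i)]
      · simp [hc', hi]
    · obtain ⟨i0, hi0⟩ : ∃ i0, c i0 ≠ 0 := by
        by_contra hall
        push_neg at hall
        exact hc0 (funext fun i => hall i)
      refine ⟨i0.1, Finset.mem_univ _, ?_⟩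
      have hneg : ev i0.1 < 0 := by
        have := hts i0.2
        simpa using (Finset.mem_filter.mp this).2
      have hc'i : c' i0.1 = c i0 := by simp [hc', i0.2]
      have : c' i0.1 ≠ 0 := by rw [hc'i]; exact hi0
      nlinarith [sq_nonneg (c' i0.1), sq_pos_of_ne_zero this]
  -- Q ≥ 0
  have hQpos : 0 ≤ Q := by
    rw [hQ]
    rw [Fin.sum_univ_four]
    simp only [Fin.sum_univ_four, hx1, hx2, mul_zero, zero_mul, add_zero, zero_add, h14, h41]
    nlinarith [sq_nonneg (x 0), sq_nonneg (x 3), mul_nonneg h11 (sq_nonneg (x 0)),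
      mul_nonneg h44 (sq_nonneg (x 3))]
  linarith



/-- The symmetrized tridiagonal matrix S with diagonal (α,γ,φ,κ) and
off-diagonal entries r₁ = √((1−α)β), r₂ = √((1−β−γ)δ), r₃ = √((1−δ−φ)(1−κ)). -/
noncomputable def Smat (α β γ δ φ κ : ℝ) : Matrix (Fin 4) (Fin 4) ℝ :=
  !![α, Real.sqrt ((1-α)*β), 0, 0;
     Real.sqrt ((1-α)*β), γ, Real.sqrt ((1-β-γ)*δ), 0;
     0, Real.sqrt ((1-β-γ)*δ), φ, Real.sqrt ((1-δ-φ)*(1-κ));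
     0, 0, Real.sqrt ((1-δ-φ)*(1-κ)), κ]

/-- Δₖ: the determinant of the leading k×k principal submatrix of a 4×4 matrix,
with Δ₀ = 1 (determinant of the empty matrix). -/
noncomputable def leadingMinor (M : Matrix (Fin 4) (Fin 4) ℝ) (k : ℕ) : ℝ :=
  if h : k ≤ 4 then (M.submatrix (Fin.castLE h) (Fin.castLE h)).det else 0

theorem stmt_8 (α β γ δ φ κ : ℝ)
    (hα : 0 ≤ α) (hα1 : α ≤ 1) (hβ : 0 ≤ β) (hβ1 : β ≤ 1)
    (hγ : 0 ≤ γ) (hγ1 : γ ≤ 1) (hδ : 0 ≤ δ) (hδ1 : δ ≤ 1)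
    (hφ : 0 ≤ φ) (hφ1 : φ ≤ 1) (hκ : 0 ≤ κ) (hκ1 : κ ≤ 1)
    (hβγ : β + γ ≤ 1) (hδφ : δ + φ ≤ 1)
    (hΔ : ∀ k, 1 ≤ k → k ≤ 4 → leadingMinor (Smat α β γ δ φ κ) k ≠ 0) :
    ((Matrix.charpoly (Smat α β γ δ φ κ)).roots.filter (fun x : ℝ => x < 0)).card
      ≤ 2 := by
  have hS : (Smat α β γ δ φ κ).IsHermitian := by
    show (Smat α β γ δ φ κ)ᴴ = _
    ext i j
    fin_cases i <;> fin_cases j <;> simp [Smat, Matrix.vecHead, Matrix.vecTail]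
  rw [charpoly_eq_prod _ hS]
  have hroots : (∏ i, (X - C (hS.eigenvalues i))).roots
      = Finset.univ.val.map hS.eigenvalues := by
    have h1 : (∏ i, (X - C (hS.eigenvalues i)))
        = ((Finset.univ.val.map hS.eigenvalues).map (fun a => X - C a)).prod := by
      rw [Multiset.map_map]; rfl
    rw [h1, Polynomial.roots_multiset_prod_X_sub_C]
  rw [hroots, Multiset.filter_map]
  rw [Multiset.card_map]
  have hcard : (Multiset.filter ((fun x : ℝ => x < 0) ∘ hS.eigenvalues) Finset.univ.val).card
      = (Finset.univ.filter (fun i => hS.eigenvalues i < 0)).card := by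
    rw [Finset.card, Finset.filter_val]
    congr 1
  rw [hcard]
  exact neg_eig_card hS (by simp [Smat, Matrix.vecHead, Matrix.vecTail]) (by simp [Smat, Matrix.vecHead, Matrix.vecTail]) (by simp [Smat, Matrix.vecHead, Matrix.vecTail]; exact hα)
    (by simp [Smat, Matrix.vecHead, Matrix.vecTail]; exact hκ)
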